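/- As L → ∞, the quantity (1/ln(L+1)) ∫₀^L ∫₀^L 1 / (√(q+1) · √(q′+1) · (q + q′)) dq dq′ tends to π. -/

import Mathlib

open MeasureTheory Filter Set Real

lemma my_arctan_le_self {x : ℝ} (hx : 0 ≤ x) : Real.arctan x ≤ x := by
  have h1 : 0 ≤ Real.arctan x := by
    rw [← Real.arctan_zero]
    exact Real.arctan_strictMono.monotone hx
  calc Real.arctan x ≤ Real.tan (Real.arctan x) :=
        Real.le_tan h1 (Real.arctan_lt_pi_div_two x)
    _ = x := Real.tan_arctan x

lemma hasDerivAt_Psi {a : ℝ} (ha : 0 < a) {x : ℝ} (hx : 0 < x + 1) :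
    HasDerivAt (fun y : ℝ => 2 / a * Real.arctan (Real.sqrt (y+1) / Real.sqrt a))
      (1 / (Real.sqrt a * Real.sqrt (x+1) * (a + (x+1)))) x := by
  have hsa : 0 < Real.sqrt a := Real.sqrt_pos.mpr ha
  have hsx : 0 < Real.sqrt (x+1) := Real.sqrt_pos.mpr hx
  have h1 : HasDerivAt (fun y : ℝ => y + 1) 1 x := (hasDerivAt_id x).add_const 1
  have h2 : HasDerivAt Real.sqrt (1/(2*Real.sqrt (x+1))) (x+1) := Real.hasDerivAt_sqrt hx.ne'
  have h3 : HasDerivAt (fun y : ℝ => Real.sqrt (y+1)) (1/(2*Real.sqrt (x+1)) * 1) x :=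
    h2.comp x h1
  have h4 : HasDerivAt (fun y : ℝ => Real.sqrt (y+1) / Real.sqrt a)
      ((1/(2*Real.sqrt (x+1)) * 1) / Real.sqrt a) x := h3.div_const _
  have h5 := (Real.hasDerivAt_arctan (Real.sqrt (x+1) / Real.sqrt a)).comp x h4
  have h6 := h5.const_mul (2/a)
  refine HasDerivAt.congr_deriv h6 ?_
  have e1 : Real.sqrt (x+1) ^ 2 = x + 1 := Real.sq_sqrt hx.le
  have e2 : Real.sqrt a ^ 2 = a := Real.sq_sqrt ha.le
  field_simp
  nlinarith [sq_nonneg (Real.sqrt a), sq_nonneg (Real.sqrt (x+1)), mul_pos hsa hsx, mul_pos ha hx]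

lemma inner_g_eval {L q : ℝ} (hL : 0 < L) (hq : 0 ≤ q) :
    ∫ x in Ioo (0:ℝ) L, 1 / (Real.sqrt (q+1) * Real.sqrt (x+1) * (q + x + 2))
      = 2/(q+1) * (Real.arctan (Real.sqrt (L+1) / Real.sqrt (q+1))
          - Real.arctan (1 / Real.sqrt (q+1))) := by
  have ha : (0:ℝ) < q + 1 := by linarith
  have key : ∀ x ∈ uIcc (0:ℝ) L,
      HasDerivAt (fun y : ℝ => 2 / (q+1) * Real.arctan (Real.sqrt (y+1) / Real.sqrt (q+1)))
        (1 / (Real.sqrt (q+1) * Real.sqrt (x+1) * (q + x + 2))) x := by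
    intro x hx
    rw [uIcc_of_le hL.le] at hx
    have hx1 : 0 < x + 1 := by linarith [hx.1]
    have := hasDerivAt_Psi ha hx1
    convert this using 2
    ring
  have hcont : ContinuousOn (fun x : ℝ => 1 / (Real.sqrt (q+1) * Real.sqrt (x+1) * (q + x + 2)))
      (uIcc (0:ℝ) L) := by
    apply ContinuousOn.div continuousOn_const
    · exact (continuousOn_const.mul ((Real.continuous_sqrt.comp (continuous_id.add continuous_const)).continuousOn)).mul (by fun_prop)
    · intro x hx
      rw [uIcc_of_le hL.le] at hx
      have hx1 : (0:ℝ) < x + 1 := by linarith [hx.1]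
      have h1 : 0 < Real.sqrt (q+1) := Real.sqrt_pos.mpr ha
      have h2 : 0 < Real.sqrt (x+1) := Real.sqrt_pos.mpr hx1
      have h3 : 0 < q + x + 2 := by linarith [hx.1]
      positivity
  have hii : IntervalIntegrable (fun x : ℝ => 1 / (Real.sqrt (q+1) * Real.sqrt (x+1) * (q + x + 2)))
      volume 0 L := hcont.intervalIntegrable
  have := intervalIntegral.integral_eq_sub_of_hasDerivAt key hii
  rw [← MeasureTheory.integral_Ioc_eq_integral_Ioo, ← intervalIntegral.integral_of_le hL.le]
  rw [this]
  simp [Real.sqrt_one]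
  ring

lemma rpow_half_aux {x : ℝ} (hx : 0 < x) : x ^ (-1/2 : ℝ) = 1 / Real.sqrt x := by
  rw [show (-1/2:ℝ) = -(1/2) by norm_num, Real.rpow_neg hx.le, ← Real.sqrt_eq_rpow, one_div]

lemma rpow_3half_aux {x : ℝ} (hx : 0 < x) : x ^ (-3/2 : ℝ) = 1 / (x * Real.sqrt x) := by
  rw [show (-3/2:ℝ) = -(1 + 1/2) by norm_num, Real.rpow_neg hx.le,
    Real.rpow_add hx, Real.rpow_one, ← Real.sqrt_eq_rpow, one_div]

lemma ptwise1 {x : ℝ} (hx : 0 < x) : 1 / ((x+1) * Real.sqrt x) ≤ x ^ (-1/2 : ℝ) := by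
  have hsx : 0 < Real.sqrt x := Real.sqrt_pos.mpr hx
  rw [rpow_half_aux hx]
  apply div_le_div_of_nonneg_left one_pos.le hsx
  nlinarith

lemma ptwise2 {x : ℝ} (hx : 1 < x) : 1 / ((x+1) * Real.sqrt x) ≤ x ^ (-3/2 : ℝ) := by
  have hx0 : (0:ℝ) < x := by linarith
  have hsx : 0 < Real.sqrt x := Real.sqrt_pos.mpr hx0
  rw [rpow_3half_aux hx0]
  apply div_le_div_of_nonneg_left one_pos.le (by positivity)
  nlinarith

lemma meas_aux : Measurable (fun x : ℝ => 1 / ((x+1) * Real.sqrt x)) := by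
  apply Measurable.div measurable_const
  exact (measurable_id.add_const 1).mul Real.continuous_sqrt.measurable

lemma K_nonneg (x : ℝ) : 0 ≤ 1 / ((x+1) * Real.sqrt x) := by
  rcases le_or_gt x 0 with h | h
  · simp [Real.sqrt_eq_zero'.mpr h]
  · positivity

lemma integrableOn_K1 : IntegrableOn (fun x : ℝ => 1 / ((x+1) * Real.sqrt x)) (Ioc 0 1) := by
  have hi : IntegrableOn (fun x : ℝ => x ^ (-1/2 : ℝ)) (Ioc (0:ℝ) 1) := by
    have := intervalIntegral.intervalIntegrable_rpow' (a := (0:ℝ)) (b := 1) (r := (-1/2 : ℝ)) (by norm_num)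
    rwa [intervalIntegrable_iff_integrableOn_Ioc_of_le (by norm_num)] at this
  apply hi.mono' meas_aux.aestronglyMeasurable.restrict
  filter_upwards [ae_restrict_mem measurableSet_Ioc] with x hx
  rw [Real.norm_eq_abs, abs_of_nonneg (K_nonneg x)]
  exact ptwise1 hx.1

lemma integrableOn_K2 : IntegrableOn (fun x : ℝ => 1 / ((x+1) * Real.sqrt x)) (Ioi 1) := by
  have hi : IntegrableOn (fun x : ℝ => x ^ (-3/2 : ℝ)) (Ioi (1:ℝ)) :=
    integrableOn_Ioi_rpow_of_lt (by norm_num) one_pos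
  apply hi.mono' meas_aux.aestronglyMeasurable.restrict
  filter_upwards [ae_restrict_mem measurableSet_Ioi] with x hx
  rw [Real.norm_eq_abs, abs_of_nonneg (K_nonneg x)]
  exact ptwise2 hx

lemma integrableOn_K : IntegrableOn (fun x : ℝ => 1 / ((x+1) * Real.sqrt x)) (Ioi 0) := by
  have := integrableOn_K1.union integrableOn_K2
  rwa [Ioc_union_Ioi_eq_Ioi (by norm_num : (0:ℝ) ≤ 1)] at this

lemma K_bound (L : ℝ) : ∫ x in Ioo (0:ℝ) L, 1 / ((x+1) * Real.sqrt x) ≤ 4 := by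
  have h1 : ∫ x in Ioo (0:ℝ) L, 1 / ((x+1) * Real.sqrt x)
      ≤ ∫ x in Ioi (0:ℝ), 1 / ((x+1) * Real.sqrt x) := by
    apply setIntegral_mono_set integrableOn_K
    · filter_upwards with x using K_nonneg x
    · exact HasSubset.Subset.eventuallyLE Ioo_subset_Ioi_self
  refine h1.trans ?_
  have hsplit : ∫ x in Ioi (0:ℝ), 1 / ((x+1) * Real.sqrt x)
      = (∫ x in Ioc (0:ℝ) 1, 1 / ((x+1) * Real.sqrt x))
        + ∫ x in Ioi (1:ℝ), 1 / ((x+1) * Real.sqrt x) := by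
    rw [← setIntegral_union (Ioc_disjoint_Ioi le_rfl) measurableSet_Ioi integrableOn_K1
      integrableOn_K2, Ioc_union_Ioi_eq_Ioi (by norm_num : (0:ℝ) ≤ 1)]
  rw [hsplit]
  have hv1 : ∫ x in Ioc (0:ℝ) 1, 1 / ((x+1) * Real.sqrt x) ≤ 2 := by
    have hmono : ∫ x in Ioc (0:ℝ) 1, 1 / ((x+1) * Real.sqrt x)
        ≤ ∫ x in Ioc (0:ℝ) 1, x ^ (-1/2 : ℝ) := by
      apply setIntegral_mono_on integrableOn_K1 _ measurableSet_Ioc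
      · intro x hx; exact ptwise1 hx.1
      · have := intervalIntegral.intervalIntegrable_rpow' (a := (0:ℝ)) (b := 1) (r := (-1/2 : ℝ)) (by norm_num)
        rwa [intervalIntegrable_iff_integrableOn_Ioc_of_le (by norm_num)] at this
    refine hmono.trans ?_
    rw [← intervalIntegral.integral_of_le (by norm_num : (0:ℝ) ≤ 1)]
    rw [integral_rpow (Or.inl (by norm_num))]
    norm_num
  have hv2 : ∫ x in Ioi (1:ℝ), 1 / ((x+1) * Real.sqrt x) ≤ 2 := by
    have hmono : ∫ x in Ioi (1:ℝ), 1 / ((x+1) * Real.sqrt x)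
        ≤ ∫ x in Ioi (1:ℝ), x ^ (-3/2 : ℝ) := by
      apply setIntegral_mono_on integrableOn_K2 (integrableOn_Ioi_rpow_of_lt (by norm_num) one_pos)
        measurableSet_Ioi
      intro x hx; exact ptwise2 hx
    refine hmono.trans ?_
    rw [integral_Ioi_rpow_of_lt (by norm_num) one_pos]
    norm_num
  linarith

lemma arctan_lb {y : ℝ} (hy : 0 < y) : π/2 - 1/y ≤ Real.arctan y := by
  have h := Real.arctan_inv_of_pos hy
  have h2 : Real.arctan y⁻¹ ≤ y⁻¹ := my_arctan_le_self (by positivity)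
  rw [h] at h2
  rw [one_div]
  linarith

-- A(q) bounds
lemma A_bounds {L q : ℝ} (hL : 0 < L) (hq : 0 < q) :
    π/(q+1) - 2/(Real.sqrt (q+1) * Real.sqrt (L+1)) - 2/((q+1)*Real.sqrt (q+1))
      ≤ 2/(q+1) * (Real.arctan (Real.sqrt (L+1) / Real.sqrt (q+1))
          - Real.arctan (1 / Real.sqrt (q+1)))
    ∧ 2/(q+1) * (Real.arctan (Real.sqrt (L+1) / Real.sqrt (q+1))
          - Real.arctan (1 / Real.sqrt (q+1))) ≤ π/(q+1) := by
  have ha : (0:ℝ) < q + 1 := by linarith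
  have hsa : 0 < Real.sqrt (q+1) := Real.sqrt_pos.mpr ha
  have hsM : 0 < Real.sqrt (L+1) := Real.sqrt_pos.mpr (by linarith)
  have hyd : 0 < Real.sqrt (L+1) / Real.sqrt (q+1) := by positivity
  constructor
  · have h1 : π/2 - Real.sqrt (q+1) / Real.sqrt (L+1) ≤
        Real.arctan (Real.sqrt (L+1) / Real.sqrt (q+1)) := by
      have := arctan_lb hyd
      rw [one_div_div] at this
      linarith
    have h2 : Real.arctan (1 / Real.sqrt (q+1)) ≤ 1 / Real.sqrt (q+1) :=
      my_arctan_le_self (by positivity)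
    have hfac : (0:ℝ) ≤ 2/(q+1) := by positivity
    have hstep : π/2 - Real.sqrt (q+1) / Real.sqrt (L+1) - 1/Real.sqrt (q+1) ≤
        Real.arctan (Real.sqrt (L+1) / Real.sqrt (q+1)) - Real.arctan (1 / Real.sqrt (q+1)) := by
      linarith
    calc π/(q+1) - 2/(Real.sqrt (q+1) * Real.sqrt (L+1)) - 2/((q+1)*Real.sqrt (q+1))
        = 2/(q+1) * (π/2 - Real.sqrt (q+1) / Real.sqrt (L+1) - 1/Real.sqrt (q+1)) := by
          have e2 : Real.sqrt (q+1) * Real.sqrt (q+1) = q + 1 := Real.mul_self_sqrt ha.le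
          set s := Real.sqrt (q+1) with hs
          rw [← e2]
          field_simp
      _ ≤ _ := by
          apply mul_le_mul_of_nonneg_left hstep hfac
  · have h1 : Real.arctan (Real.sqrt (L+1) / Real.sqrt (q+1)) ≤ π/2 :=
      (Real.arctan_lt_pi_div_two _).le
    have h2 : 0 ≤ Real.arctan (1 / Real.sqrt (q+1)) := by
      rw [← Real.arctan_zero]
      exact Real.arctan_strictMono.monotone (by positivity)
    have hfac : (0:ℝ) ≤ 2/(q+1) := by positivity
    calc 2/(q+1) * (Real.arctan (Real.sqrt (L+1) / Real.sqrt (q+1))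
          - Real.arctan (1 / Real.sqrt (q+1))) ≤ 2/(q+1) * (π/2) := by
          apply mul_le_mul_of_nonneg_left (by linarith) hfac
      _ = π/(q+1) := by ring

lemma D_ptwise {q x : ℝ} (hq : 0 < q) (hx : 0 < x) :
    2 / (Real.sqrt (q+1) * Real.sqrt (x+1) * ((q+x) * (q+x+2)))
      ≤ 1/(2*(q+1)*Real.sqrt q) * (1 / ((x+1)*Real.sqrt x)) := by
  have hsq : 0 < Real.sqrt q := Real.sqrt_pos.mpr hq
  have hsx : 0 < Real.sqrt x := Real.sqrt_pos.mpr hx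
  have hs1 : 0 < Real.sqrt (q+1) := Real.sqrt_pos.mpr (by linarith)
  have hs2 : 0 < Real.sqrt (x+1) := Real.sqrt_pos.mpr (by linarith)
  have eq1 : Real.sqrt q * Real.sqrt q = q := Real.mul_self_sqrt hq.le
  have eq2 : Real.sqrt x * Real.sqrt x = x := Real.mul_self_sqrt hx.le
  have eq3 : Real.sqrt (q+1) * Real.sqrt (q+1) = q+1 := Real.mul_self_sqrt (by linarith)
  have eq4 : Real.sqrt (x+1) * Real.sqrt (x+1) = x+1 := Real.mul_self_sqrt (by linarith)
  have h1 : 2*(Real.sqrt q*Real.sqrt x) ≤ q + x := by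
    nlinarith [sq_nonneg (Real.sqrt q - Real.sqrt x)]
  have h2 : 2*(Real.sqrt (q+1)*Real.sqrt (x+1)) ≤ q + x + 2 := by
    nlinarith [sq_nonneg (Real.sqrt (q+1) - Real.sqrt (x+1))]
  rw [one_div_mul_one_div, div_le_div_iff₀ (by positivity) (by positivity)]
  have k1 : (2*(Real.sqrt q*Real.sqrt x)) * (2*(Real.sqrt (q+1)*Real.sqrt (x+1)))
      ≤ (q+x)*(q+x+2) := by
    apply mul_le_mul h1 h2 (by positivity) (by positivity)
  have k2 : Real.sqrt (q+1)*Real.sqrt (x+1) * ((2*(Real.sqrt q*Real.sqrt x))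
        * (2*(Real.sqrt (q+1)*Real.sqrt (x+1)))) = 4*(q+1)*(x+1)*(Real.sqrt q*Real.sqrt x) := by
    calc Real.sqrt (q+1)*Real.sqrt (x+1) * ((2*(Real.sqrt q*Real.sqrt x))
        * (2*(Real.sqrt (q+1)*Real.sqrt (x+1))))
        = (Real.sqrt (q+1)*Real.sqrt (q+1))*((Real.sqrt (x+1)*Real.sqrt (x+1))
            *(4*(Real.sqrt q*Real.sqrt x))) := by ring
      _ = 4*(q+1)*(x+1)*(Real.sqrt q*Real.sqrt x) := by rw [eq3, eq4]; ring
  nlinarith [k2, mul_le_mul_of_nonneg_left k1 (mul_nonneg hs1.le hs2.le)]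

lemma inner_bounds {L q : ℝ} (hL : 0 < L) (hq : q ∈ Ioo (0:ℝ) L) :
    π/(q+1) - 2/(Real.sqrt (q+1) * Real.sqrt (L+1)) - 2/((q+1)*Real.sqrt (q+1))
      ≤ (∫ x in Ioo (0:ℝ) L, 1 / (Real.sqrt (q+1) * Real.sqrt (x+1) * (q + x)))
    ∧ (∫ x in Ioo (0:ℝ) L, 1 / (Real.sqrt (q+1) * Real.sqrt (x+1) * (q + x)))
      ≤ π/(q+1) + 2/((q+1)*Real.sqrt q) := by
  obtain ⟨hq0, hqL⟩ := hq
  have ha : (0:ℝ) < q + 1 := by linarith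
  have hs1 : 0 < Real.sqrt (q+1) := Real.sqrt_pos.mpr ha
  -- continuity facts on Icc 0 L
  have hcg : ContinuousOn (fun x : ℝ => 1 / (Real.sqrt (q+1) * Real.sqrt (x+1) * (q + x + 2)))
      (Icc (0:ℝ) L) := by
    apply ContinuousOn.div continuousOn_const (by fun_prop)
    intro x hx
    have hx1 : (0:ℝ) < x + 1 := by linarith [hx.1]
    have h2 : 0 < Real.sqrt (x+1) := Real.sqrt_pos.mpr hx1
    have h3 : 0 < q + x + 2 := by linarith [hx.1]
    positivity
  have hcD : ContinuousOn (fun x : ℝ => 2 / (Real.sqrt (q+1) * Real.sqrt (x+1) * ((q+x) * (q+x+2))))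
      (Icc (0:ℝ) L) := by
    apply ContinuousOn.div continuousOn_const (by fun_prop)
    intro x hx
    have hx1 : (0:ℝ) < x + 1 := by linarith [hx.1]
    have h2 : 0 < Real.sqrt (x+1) := Real.sqrt_pos.mpr hx1
    have h3 : 0 < q + x := by linarith [hx.1]
    have h4 : 0 < q + x + 2 := by linarith [hx.1]
    positivity
  have hgint : IntegrableOn (fun x : ℝ => 1 / (Real.sqrt (q+1) * Real.sqrt (x+1) * (q + x + 2)))
      (Ioo (0:ℝ) L) := (hcg.integrableOn_Icc).mono_set Ioo_subset_Icc_self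
  have hDint : IntegrableOn (fun x : ℝ => 2 / (Real.sqrt (q+1) * Real.sqrt (x+1) * ((q+x) * (q+x+2))))
      (Ioo (0:ℝ) L) := (hcD.integrableOn_Icc).mono_set Ioo_subset_Icc_self
  -- decomposition
  have hsplit : (∫ x in Ioo (0:ℝ) L, 1 / (Real.sqrt (q+1) * Real.sqrt (x+1) * (q + x)))
      = (∫ x in Ioo (0:ℝ) L, 1 / (Real.sqrt (q+1) * Real.sqrt (x+1) * (q + x + 2)))
        + ∫ x in Ioo (0:ℝ) L, 2 / (Real.sqrt (q+1) * Real.sqrt (x+1) * ((q+x) * (q+x+2))) := by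
    rw [← integral_add hgint hDint]
    apply setIntegral_congr_fun measurableSet_Ioo
    intro x hx
    have hx1 : (0:ℝ) < x + 1 := by linarith [hx.1]
    have h2 : 0 < Real.sqrt (x+1) := Real.sqrt_pos.mpr hx1
    have h3 : 0 < q + x := by linarith [hx.1]
    have h4 : 0 < q + x + 2 := by linarith [hx.1]
    field_simp
  have hD0 : 0 ≤ ∫ x in Ioo (0:ℝ) L, 2 / (Real.sqrt (q+1) * Real.sqrt (x+1) * ((q+x) * (q+x+2))) := by
    apply setIntegral_nonneg measurableSet_Ioo
    intro x hx
    have hx1 : (0:ℝ) < x + 1 := by linarith [hx.1]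
    have h2 : 0 < Real.sqrt (x+1) := Real.sqrt_pos.mpr hx1
    have h3 : 0 < q + x := by linarith [hx.1]
    positivity
  have hDub : (∫ x in Ioo (0:ℝ) L, 2 / (Real.sqrt (q+1) * Real.sqrt (x+1) * ((q+x) * (q+x+2))))
      ≤ 2/((q+1)*Real.sqrt q) := by
    have hKint : IntegrableOn (fun x : ℝ => 1/(2*(q+1)*Real.sqrt q) * (1 / ((x+1)*Real.sqrt x)))
        (Ioo (0:ℝ) L) :=
      (integrableOn_K.mono_set Ioo_subset_Ioi_self).const_mul _
    have step1 : (∫ x in Ioo (0:ℝ) L, 2 / (Real.sqrt (q+1) * Real.sqrt (x+1) * ((q+x) * (q+x+2))))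
        ≤ ∫ x in Ioo (0:ℝ) L, 1/(2*(q+1)*Real.sqrt q) * (1 / ((x+1)*Real.sqrt x)) := by
      apply setIntegral_mono_on hDint hKint measurableSet_Ioo
      intro x hx
      exact D_ptwise hq0 hx.1
    refine step1.trans ?_
    rw [integral_const_mul]
    have hc : (0:ℝ) ≤ 1/(2*(q+1)*Real.sqrt q) := by positivity
    calc 1/(2*(q+1)*Real.sqrt q) * ∫ x in Ioo (0:ℝ) L, 1 / ((x+1)*Real.sqrt x)
        ≤ 1/(2*(q+1)*Real.sqrt q) * 4 := mul_le_mul_of_nonneg_left (K_bound L) hc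
      _ = 2/((q+1)*Real.sqrt q) := by
          have hsq : Real.sqrt q ≠ 0 := (Real.sqrt_pos.mpr hq0).ne'
          field_simp
          ring
  rw [hsplit, inner_g_eval hL hq0.le]
  obtain ⟨hA1, hA2⟩ := A_bounds hL hq0
  constructor
  · linarith
  · linarith

lemma outer_log_eval {L : ℝ} (hL : 0 < L) :
    ∫ q in Ioo (0:ℝ) L, π / (q+1) = π * Real.log (L+1) := by
  have key : ∀ x ∈ uIcc (0:ℝ) L, HasDerivAt (fun y : ℝ => π * Real.log (y+1)) (π / (x+1)) x := by
    intro x hx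
    rw [uIcc_of_le hL.le] at hx
    have hx1 : (0:ℝ) < x + 1 := by linarith [hx.1]
    have h1 : HasDerivAt (fun y : ℝ => y + 1) 1 x := (hasDerivAt_id x).add_const 1
    have h2 := ((Real.hasDerivAt_log hx1.ne').comp x h1).const_mul π
    refine HasDerivAt.congr_deriv h2 ?_
    field_simp
  have hcont : ContinuousOn (fun x : ℝ => π / (x+1)) (uIcc (0:ℝ) L) := by
    apply ContinuousOn.div continuousOn_const (by fun_prop)
    intro x hx
    rw [uIcc_of_le hL.le] at hx
    intro h; linarith [hx.1]
  rw [← MeasureTheory.integral_Ioc_eq_integral_Ioo, ← intervalIntegral.integral_of_le hL.le,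
    intervalIntegral.integral_eq_sub_of_hasDerivAt key hcont.intervalIntegrable]
  simp

lemma outer_l_eval {L : ℝ} (hL : 0 < L) :
    π * Real.log (L+1) - 8 ≤ ∫ q in Ioo (0:ℝ) L,
      (π/(q+1) - 2/(Real.sqrt (q+1) * Real.sqrt (L+1)) - 2/((q+1)*Real.sqrt (q+1))) := by
  have hM : (0:ℝ) < L + 1 := by linarith
  have hsM : 0 < Real.sqrt (L+1) := Real.sqrt_pos.mpr hM
  have key : ∀ x ∈ uIcc (0:ℝ) L, HasDerivAt
      (fun y : ℝ => π * Real.log (y+1) - 4/Real.sqrt (L+1) * Real.sqrt (y+1)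
        + 4 * (Real.sqrt (y+1))⁻¹)
      (π/(x+1) - 2/(Real.sqrt (x+1) * Real.sqrt (L+1)) - 2/((x+1)*Real.sqrt (x+1))) x := by
    intro x hx
    rw [uIcc_of_le hL.le] at hx
    have hx1 : (0:ℝ) < x + 1 := by linarith [hx.1]
    have hsx : 0 < Real.sqrt (x+1) := Real.sqrt_pos.mpr hx1
    have h1 : HasDerivAt (fun y : ℝ => y + 1) 1 x := (hasDerivAt_id x).add_const 1
    have hlog := ((Real.hasDerivAt_log hx1.ne').comp x h1).const_mul π
    have hsqrt : HasDerivAt (fun y : ℝ => Real.sqrt (y+1)) (1/(2*Real.sqrt (x+1)) * 1) x :=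
      (Real.hasDerivAt_sqrt hx1.ne').comp x h1
    have hterm2 := hsqrt.const_mul (4/Real.sqrt (L+1))
    have hterm3 := (hsqrt.inv hsx.ne').const_mul (4:ℝ)
    have := (hlog.sub hterm2).add hterm3
    refine HasDerivAt.congr_deriv this ?_
    have e : Real.sqrt (x+1) * Real.sqrt (x+1) = x + 1 := Real.mul_self_sqrt hx1.le
    rw [← e]
    field_simp
    simp only [Real.sqrt_sq (Real.sqrt_nonneg _)]
    ring
  have hcont : ContinuousOn (fun x : ℝ =>
      π/(x+1) - 2/(Real.sqrt (x+1) * Real.sqrt (L+1)) - 2/((x+1)*Real.sqrt (x+1)))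
      (uIcc (0:ℝ) L) := by
    rw [uIcc_of_le hL.le]
    apply ContinuousOn.sub
    apply ContinuousOn.sub
    · apply ContinuousOn.div continuousOn_const (by fun_prop)
      intro x hx h; linarith [hx.1]
    · apply ContinuousOn.div continuousOn_const (by fun_prop)
      intro x hx
      have hx1 : (0:ℝ) < x + 1 := by linarith [hx.1]
      have hsx : 0 < Real.sqrt (x+1) := Real.sqrt_pos.mpr hx1
      positivity
    · apply ContinuousOn.div continuousOn_const (by fun_prop)
      intro x hx
      have hx1 : (0:ℝ) < x + 1 := by linarith [hx.1]
      have hsx : 0 < Real.sqrt (x+1) := Real.sqrt_pos.mpr hx1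
      positivity
  rw [← MeasureTheory.integral_Ioc_eq_integral_Ioo, ← intervalIntegral.integral_of_le hL.le,
    intervalIntegral.integral_eq_sub_of_hasDerivAt key hcont.intervalIntegrable]
  have e : Real.sqrt (L+1) * Real.sqrt (L+1) = L + 1 := Real.mul_self_sqrt hM.le
  have h1 : 4/Real.sqrt (L+1) * Real.sqrt (L+1) = 4 := by
    field_simp
  have hinv : 0 < (Real.sqrt (L+1))⁻¹ := by positivity
  simp only [Real.sqrt_one, zero_add, Real.log_one]
  rw [h1]
  have h2 : 4 / Real.sqrt (L+1) = 4 * (Real.sqrt (L+1))⁻¹ := by ring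
  rw [h2]
  nlinarith [hinv]

lemma integrableOn_pi_div {L : ℝ} (hL : 0 < L) :
    IntegrableOn (fun q : ℝ => π / (q+1)) (Ioo 0 L) := by
  have hc : ContinuousOn (fun q : ℝ => π / (q+1)) (Icc (0:ℝ) L) := by
    apply ContinuousOn.div continuousOn_const (by fun_prop)
    intro x hx h; linarith [hx.1]
  exact hc.integrableOn_Icc.mono_set Ioo_subset_Icc_self

lemma integrableOn_c {L : ℝ} :
    IntegrableOn (fun q : ℝ => 2/((q+1)*Real.sqrt q)) (Ioo 0 L) := by
  have h := (integrableOn_K.mono_set (Ioo_subset_Ioi_self : Ioo (0:ℝ) L ⊆ Ioi 0)).const_mul (2:ℝ)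
  apply h.congr
  filter_upwards with x
  rw [mul_one_div]

lemma integrableOn_u {L : ℝ} (hL : 0 < L) :
    IntegrableOn (fun q : ℝ => π/(q+1) + 2/((q+1)*Real.sqrt q)) (Ioo 0 L) :=
  (integrableOn_pi_div hL).add integrableOn_c

lemma integral_u_le {L : ℝ} (hL : 0 < L) :
    ∫ q in Ioo (0:ℝ) L, (π/(q+1) + 2/((q+1)*Real.sqrt q)) ≤ π * Real.log (L+1) + 8 := by
  rw [integral_add (integrableOn_pi_div hL) integrableOn_c, outer_log_eval hL]
  have h2 : ∫ q in Ioo (0:ℝ) L, 2/((q+1)*Real.sqrt q) ≤ 8 := by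
    have e : ∀ q : ℝ, 2/((q+1)*Real.sqrt q) = 2 * (1/((q+1)*Real.sqrt q)) := by
      intro q; rw [mul_one_div]
    simp_rw [e]
    rw [integral_const_mul]
    linarith [K_bound L]
  linarith

lemma integrableOn_l {L : ℝ} (hL : 0 < L) :
    IntegrableOn (fun q : ℝ =>
      π/(q+1) - 2/(Real.sqrt (q+1) * Real.sqrt (L+1)) - 2/((q+1)*Real.sqrt (q+1))) (Ioo 0 L) := by
  have hc : ContinuousOn (fun q : ℝ =>
      π/(q+1) - 2/(Real.sqrt (q+1) * Real.sqrt (L+1)) - 2/((q+1)*Real.sqrt (q+1)))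
      (Icc (0:ℝ) L) := by
    apply ContinuousOn.sub
    apply ContinuousOn.sub
    · apply ContinuousOn.div continuousOn_const (by fun_prop)
      intro x hx h; linarith [hx.1]
    · apply ContinuousOn.div continuousOn_const (by fun_prop)
      intro x hx
      have hx1 : (0:ℝ) < x + 1 := by linarith [hx.1]
      have hsx : 0 < Real.sqrt (x+1) := Real.sqrt_pos.mpr hx1
      have hsM : 0 < Real.sqrt (L+1) := Real.sqrt_pos.mpr (by linarith)
      positivity
    · apply ContinuousOn.div continuousOn_const (by fun_prop)
      intro x hx
      have hx1 : (0:ℝ) < x + 1 := by linarith [hx.1]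
      have hsx : 0 < Real.sqrt (x+1) := Real.sqrt_pos.mpr hx1
      positivity
  exact hc.integrableOn_Icc.mono_set Ioo_subset_Icc_self

lemma inner_nonneg {L q : ℝ} (hq : 0 < q) :
    0 ≤ ∫ x in Ioo (0:ℝ) L, 1 / (Real.sqrt (q+1) * Real.sqrt (x+1) * (q + x)) := by
  apply setIntegral_nonneg measurableSet_Ioo
  intro x hx
  have hx1 : (0:ℝ) < x + 1 := by linarith [hx.1]
  have h2 : 0 < Real.sqrt (x+1) := Real.sqrt_pos.mpr hx1
  have h1 : 0 < Real.sqrt (q+1) := Real.sqrt_pos.mpr (by linarith)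
  have h3 : 0 < q + x := by linarith [hx.1]
  positivity

lemma integrableOn_inner {L : ℝ} (hL : 0 < L) :
    IntegrableOn (fun q : ℝ => ∫ x in Ioo (0:ℝ) L,
      1 / (Real.sqrt (q+1) * Real.sqrt (x+1) * (q + x))) (Ioo 0 L) := by
  have hmeas : StronglyMeasurable
      (fun p : ℝ × ℝ => 1 / (Real.sqrt (p.1+1) * Real.sqrt (p.2+1) * (p.1 + p.2))) := by
    apply Measurable.stronglyMeasurable
    apply Measurable.div measurable_const
    apply Measurable.mul
    apply Measurable.mul
    · exact Real.continuous_sqrt.measurable.comp (measurable_fst.add_const 1)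
    · exact Real.continuous_sqrt.measurable.comp (measurable_snd.add_const 1)
    · exact measurable_fst.add measurable_snd
  have hsm : StronglyMeasurable (fun q : ℝ => ∫ x in Ioo (0:ℝ) L,
      1 / (Real.sqrt (q+1) * Real.sqrt (x+1) * (q + x))) :=
    hmeas.integral_prod_right'
  apply Integrable.mono' (integrableOn_u hL) hsm.aestronglyMeasurable
  rw [ae_restrict_iff' measurableSet_Ioo]
  filter_upwards with q hq
  rw [Real.norm_eq_abs, abs_of_nonneg (inner_nonneg hq.1)]
  exact (inner_bounds hL hq).2

lemma outer_bounds {L : ℝ} (hL : 0 < L) :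
    π * Real.log (L+1) - 8 ≤ (∫ q in Ioo (0:ℝ) L, ∫ x in Ioo (0:ℝ) L,
        1 / (Real.sqrt (q+1) * Real.sqrt (x+1) * (q + x)))
    ∧ (∫ q in Ioo (0:ℝ) L, ∫ x in Ioo (0:ℝ) L,
        1 / (Real.sqrt (q+1) * Real.sqrt (x+1) * (q + x))) ≤ π * Real.log (L+1) + 8 := by
  constructor
  · refine (outer_l_eval hL).trans ?_
    apply setIntegral_mono_on (integrableOn_l hL) (integrableOn_inner hL) measurableSet_Ioo
    intro q hq
    exact (inner_bounds hL hq).1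
  · refine le_trans ?_ (integral_u_le hL)
    apply setIntegral_mono_on (integrableOn_inner hL) (integrableOn_u hL) measurableSet_Ioo
    intro q hq
    exact (inner_bounds hL hq).2

theorem quadratic_form_tends_to_pi :
    Tendsto (fun L : ℝ => (Real.log (L + 1))⁻¹ *
        ∫ q in Set.Ioo (0 : ℝ) L, ∫ q' in Set.Ioo (0 : ℝ) L,
          1 / (Real.sqrt (q + 1) * Real.sqrt (q' + 1) * (q + q')))
      atTop (nhds Real.pi) := by
  have hlog : Tendsto (fun L : ℝ => Real.log (L + 1)) atTop atTop :=
    Real.tendsto_log_atTop.comp (tendsto_atTop_add_const_right _ 1 tendsto_id)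
  have hinv : Tendsto (fun L : ℝ => (Real.log (L + 1))⁻¹) atTop (nhds 0) :=
    hlog.inv_tendsto_atTop
  have hlo : Tendsto (fun L : ℝ => π - 8 * (Real.log (L + 1))⁻¹) atTop (nhds π) := by
    have := (tendsto_const_nhds (x := π) (f := atTop (α := ℝ))).sub ((hinv.const_mul 8))
    simpa using this
  have hhi : Tendsto (fun L : ℝ => π + 8 * (Real.log (L + 1))⁻¹) atTop (nhds π) := by
    have := (tendsto_const_nhds (x := π) (f := atTop (α := ℝ))).add ((hinv.const_mul 8))
    simpa using this
  apply tendsto_of_tendsto_of_tendsto_of_le_of_le' hlo hhi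
  · filter_upwards [eventually_ge_atTop (1:ℝ)] with L hL1
    have hL : (0:ℝ) < L := by linarith
    have hlogpos : 0 < Real.log (L + 1) := Real.log_pos (by linarith)
    have hb := (outer_bounds hL).1
    have hinv0 : 0 ≤ (Real.log (L + 1))⁻¹ := by positivity
    have := mul_le_mul_of_nonneg_left hb hinv0
    have e : (Real.log (L + 1))⁻¹ * (π * Real.log (L+1) - 8)
        = π - 8 * (Real.log (L + 1))⁻¹ := by
      field_simp
    linarith
  · filter_upwards [eventually_ge_atTop (1:ℝ)] with L hL1
    have hL : (0:ℝ) < L := by linarith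
    have hlogpos : 0 < Real.log (L + 1) := Real.log_pos (by linarith)
    have hb := (outer_bounds hL).2
    have hinv0 : 0 ≤ (Real.log (L + 1))⁻¹ := by positivity
    have := mul_le_mul_of_nonneg_left hb hinv0
    have e : (Real.log (L + 1))⁻¹ * (π * Real.log (L+1) + 8)
        = π + 8 * (Real.log (L + 1))⁻¹ := by
      field_simp
    linarith
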